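/- arXiv:2501.18302 — 2 statements merged into one kernel-verified Lean document; each statement's English description precedes it below -/
import Mathlib

section
/- Let ψ₁ be the modified stream function, i.e. an axially symmetric smooth solution of −ψ_{1,rr} − (3/r)ψ_{1,r} − ψ_{1,zz} = Γ in Ω with ψ₁ = 0 on S, where Γ is axially symmetric, smooth, and vanishes on S, and ψ₁ admits the expansion ψ₁ = d₁(z) + d₂(z)r² + … near the axis. Then there is a constant c > 0 such that ∫_Ω (ψ_{1,rr}² + ψ_{1,rz}² + ψ_{1,zz}² + ψ_{1,r}²/r²) dx + ∫_{−a}^{a} (ψ_{1,z}²|_{r=0} + ψ_{1,r}²|_{r=R}) dz ≤ c |Γ|²_{2,Ω}. -/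
open MeasureTheory Real Set
open scoped ENNReal

noncomputable section

/-- The half-strip `(0,R) × (-a,a)` of `(r,z)` coordinates describing the cylinder
`Ω = {x ∈ ℝ³ : x₁² + x₂² < R², |x₃| < a}`. -/
def cylStrip (R a : ℝ) : Set (ℝ × ℝ) := Ioo 0 R ×ˢ Ioo (-a) a

/-- The measure on the `(r,z)` half-strip corresponding to Lebesgue measure on the
cylinder `Ω` for axially symmetric integrands: `dμ = 2π r dr dz`. -/
def cylMeas (R a : ℝ) : Measure (ℝ × ℝ) :=
  ((volume : Measure (ℝ × ℝ)).restrict (cylStrip R a)).withDensity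
    fun q => ENNReal.ofReal (2 * π * q.1)

/-- `∂_r` of a function of `(r,z)`. -/
def qdr (w : ℝ → ℝ → ℝ) : ℝ → ℝ → ℝ := fun r z => deriv (fun s => w s z) r
/-- `∂_z` of a function of `(r,z)`. -/
def qdz (w : ℝ → ℝ → ℝ) : ℝ → ℝ → ℝ := fun r z => deriv (fun s => w r s) z

/-- Hypotheses on the modified stream function `ψ₁` and the datum `Γ`:
smoothness, axial symmetry (built in: functions of `(r,z)`), the equation
`−ψ₁,rr − (3/r)ψ₁,r − ψ₁,zz = Γ` in `Ω`, `ψ₁ = 0` and `Γ = 0` on `S`, and the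
behaviour `ψ₁,r, ψ₁,rz, ψ₁,rzz = O(r)` near the axis coming from the expansion
`ψ₁ = d₁(z) + d₂(z) r² + …`. -/
structure ModStream (R a : ℝ) (ψ Γ : ℝ → ℝ → ℝ) : Prop where
  smooth_ψ : ∀ n : ℕ, ContDiff ℝ n (fun q : ℝ × ℝ => ψ q.1 q.2)
  smooth_Γ : ∀ n : ℕ, ContDiff ℝ n (fun q : ℝ × ℝ => Γ q.1 q.2)
  eqn : ∀ r z, (r, z) ∈ cylStrip R a →
    - qdr (qdr ψ) r z - (3 / r) * qdr ψ r z - qdz (qdz ψ) r z = Γ r z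
  ψ_lat : ∀ z ∈ Icc (-a) a, ψ R z = 0
  ψ_top : ∀ r ∈ Icc (0:ℝ) R, ψ r a = 0 ∧ ψ r (-a) = 0
  Γ_lat : ∀ z ∈ Icc (-a) a, Γ R z = 0
  Γ_top : ∀ r ∈ Icc (0:ℝ) R, Γ r a = 0 ∧ Γ r (-a) = 0
  axis : ∃ C : ℝ, ∀ r ∈ Ioo (0:ℝ) R, ∀ z ∈ Icc (-a) a,
    |qdr ψ r z| ≤ C * r ∧ |qdr (qdz ψ) r z| ≤ C * r ∧ |qdr (qdz (qdz ψ)) r z| ≤ C * r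



abbrev Sm (w : ℝ → ℝ → ℝ) : Prop := ∀ n : ℕ, ContDiff ℝ n (fun q : ℝ × ℝ => w q.1 q.2)

variable {w : ℝ → ℝ → ℝ}

lemma Sm.diff (hw : Sm w) : Differentiable ℝ (fun q : ℝ × ℝ => w q.1 q.2) :=
  (hw 1).differentiable (by simp)

lemma diffAt_fst (hw : Sm w) (r z : ℝ) : DifferentiableAt ℝ (fun s => w s z) r := by
  have h2 : DifferentiableAt ℝ (fun s : ℝ => (s, z)) r :=
    (differentiable_id.prodMk (differentiable_const z)) r
  exact (hw.diff (r, z)).comp r h2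

lemma diffAt_snd (hw : Sm w) (r z : ℝ) : DifferentiableAt ℝ (fun t => w r t) z := by
  have h2 : DifferentiableAt ℝ (fun t : ℝ => (r, t)) z :=
    ((differentiable_const r).prodMk differentiable_id) z
  exact (hw.diff (r, z)).comp z h2

lemma hasDerivAt_qdr (hw : Sm w) (r z : ℝ) :
    HasDerivAt (fun s => w s z) (qdr w r z) r := (diffAt_fst hw r z).hasDerivAt

lemma hasDerivAt_qdz (hw : Sm w) (r z : ℝ) :
    HasDerivAt (fun t => w r t) (qdz w r z) z := (diffAt_snd hw r z).hasDerivAt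

lemma qdr_eq_fderiv (hw : Sm w) (r z : ℝ) :
    qdr w r z = fderiv ℝ (fun q : ℝ × ℝ => w q.1 q.2) (r, z) (1, 0) := by
  have hline : HasDerivAt (fun s : ℝ => (s, z)) ((1:ℝ), (0:ℝ)) r :=
    (hasDerivAt_id r).prodMk (hasDerivAt_const r z)
  have h1 : HasDerivAt (fun s => w s z)
      (fderiv ℝ (fun q : ℝ × ℝ => w q.1 q.2) (r, z) (1, 0)) r :=
    by have := (hw.diff (r, z)).hasFDerivAt.comp_hasDerivAt r hline; exact this
  exact h1.deriv ▸ rfl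

lemma qdz_eq_fderiv (hw : Sm w) (r z : ℝ) :
    qdz w r z = fderiv ℝ (fun q : ℝ × ℝ => w q.1 q.2) (r, z) (0, 1) := by
  have hline : HasDerivAt (fun t : ℝ => (r, t)) ((0:ℝ), (1:ℝ)) z :=
    (hasDerivAt_const z r).prodMk (hasDerivAt_id z)
  have h1 : HasDerivAt (fun t => w r t)
      (fderiv ℝ (fun q : ℝ × ℝ => w q.1 q.2) (r, z) (0, 1)) z :=
    by have := (hw.diff (r, z)).hasFDerivAt.comp_hasDerivAt z hline; exact this
  exact h1.deriv ▸ rfl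

lemma Sm.fderiv_apply (hw : Sm w) (v : ℝ × ℝ) :
    Sm (fun r z => fderiv ℝ (fun q : ℝ × ℝ => w q.1 q.2) (r, z) v) := by
  intro n
  have h : ContDiff ℝ n (fun q : ℝ × ℝ =>
      fderiv ℝ (fun q : ℝ × ℝ => w q.1 q.2) q v) :=
    ((hw (n+1)).fderiv_right (by exact_mod_cast le_rfl)).clm_apply contDiff_const
  exact h

lemma contDiff_qdr (hw : Sm w) : Sm (qdr w) := by
  have e : (fun q : ℝ × ℝ => qdr w q.1 q.2)
      = fun q : ℝ × ℝ => fderiv ℝ (fun q : ℝ × ℝ => w q.1 q.2) q (1, 0) := by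
    funext q; exact qdr_eq_fderiv hw q.1 q.2
  intro n; rw [show (fun q : ℝ × ℝ => qdr w q.1 q.2) = _ from e]
  exact hw.fderiv_apply (1, 0) n

lemma contDiff_qdz (hw : Sm w) : Sm (qdz w) := by
  have e : (fun q : ℝ × ℝ => qdz w q.1 q.2)
      = fun q : ℝ × ℝ => fderiv ℝ (fun q : ℝ × ℝ => w q.1 q.2) q (0, 1) := by
    funext q; exact qdz_eq_fderiv hw q.1 q.2
  intro n; rw [show (fun q : ℝ × ℝ => qdz w q.1 q.2) = _ from e]
  exact hw.fderiv_apply (0, 1) n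

lemma fderiv_apply_const_deriv (hw : Sm w) (p : ℝ × ℝ) (v u : ℝ × ℝ) :
    fderiv ℝ (fun q => fderiv ℝ (fun q : ℝ × ℝ => w q.1 q.2) q v) p u
      = fderiv ℝ (fderiv ℝ (fun q : ℝ × ℝ => w q.1 q.2)) p u v := by
  set W := fun q : ℝ × ℝ => w q.1 q.2 with hW
  have hW' : ContDiff ℝ (1:ℕ) (fderiv ℝ W) := (hw 2).fderiv_right (by exact_mod_cast le_rfl)
  have h1 : HasFDerivAt (fun q => fderiv ℝ W q v)
      ((fderiv ℝ (fderiv ℝ W) p).flip v) p := by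
    have := ((hW'.differentiable (by simp)) p).hasFDerivAt.clm_apply
      (hasFDerivAt_const v p)
    simpa using this
  rw [h1.fderiv]; rfl

lemma snd_fderiv_symm (hw : Sm w) (p : ℝ × ℝ) (u v : ℝ × ℝ) :
    fderiv ℝ (fderiv ℝ (fun q : ℝ × ℝ => w q.1 q.2)) p u v
      = fderiv ℝ (fderiv ℝ (fun q : ℝ × ℝ => w q.1 q.2)) p v u := by
  set W := fun q : ℝ × ℝ => w q.1 q.2 with hW
  have hfd : ∀ y, HasFDerivAt W (fderiv ℝ W y) y := fun y => (hw.diff y).hasFDerivAt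
  have hW' : ContDiff ℝ (1:ℕ) (fderiv ℝ W) := (hw 2).fderiv_right (by exact_mod_cast le_rfl)
  have h2 : HasFDerivAt (fderiv ℝ W) (fderiv ℝ (fderiv ℝ W) p) p :=
    ((hW'.differentiable (by simp)) p).hasFDerivAt
  exact second_derivative_symmetric hfd h2 u v

/-- Clairaut: mixed partials commute for smooth functions. -/
lemma qdr_qdz_comm (hw : Sm w) (r z : ℝ) :
    qdr (qdz w) r z = qdz (qdr w) r z := by
  have e1 : (fun q : ℝ × ℝ => qdz w q.1 q.2)
      = fun q : ℝ × ℝ => fderiv ℝ (fun q : ℝ × ℝ => w q.1 q.2) q (0, 1) := by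
    funext q; exact qdz_eq_fderiv hw q.1 q.2
  have e2 : (fun q : ℝ × ℝ => qdr w q.1 q.2)
      = fun q : ℝ × ℝ => fderiv ℝ (fun q : ℝ × ℝ => w q.1 q.2) q (1, 0) := by
    funext q; exact qdr_eq_fderiv hw q.1 q.2
  have h1 : qdr (qdz w) r z
      = fderiv ℝ (fun q : ℝ × ℝ => qdz w q.1 q.2) (r, z) (1, 0) :=
    qdr_eq_fderiv (contDiff_qdz hw) r z
  have h2 : qdz (qdr w) r z
      = fderiv ℝ (fun q : ℝ × ℝ => qdr w q.1 q.2) (r, z) (0, 1) :=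
    qdz_eq_fderiv (contDiff_qdr hw) r z
  rw [h1, h2, e1, e2, fderiv_apply_const_deriv hw, fderiv_apply_const_deriv hw,
    snd_fderiv_symm hw]

lemma deriv_eq_zero_of_eventually {f : ℝ → ℝ} {U : Set ℝ} (hU : IsOpen U) {x : ℝ}
    (hx : x ∈ U) (hf : ∀ y ∈ U, f y = 0) : deriv f x = 0 := by
  have h : f =ᶠ[nhds x] fun _ => (0:ℝ) := by
    filter_upwards [hU.mem_nhds hx] with y hy using hf y hy
  rw [h.deriv_eq, deriv_const]

lemma eq_zero_at_zero_of_bound {g : ℝ → ℝ} (hg : Continuous g) {C R : ℝ} (hR : 0 < R)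
    (hb : ∀ r ∈ Ioo (0:ℝ) R, |g r| ≤ C * r) : g 0 = 0 := by
  have hne : (nhdsWithin (0:ℝ) (Ioo 0 R)).NeBot :=
    mem_closure_iff_nhdsWithin_neBot.1 (by
      rw [closure_Ioo hR.ne]; exact ⟨le_rfl, hR.le⟩)
  have h1 : Filter.Tendsto g (nhdsWithin 0 (Ioo 0 R)) (nhds (g 0)) :=
    (hg.tendsto 0).mono_left nhdsWithin_le_nhds
  have h2 : Filter.Tendsto g (nhdsWithin 0 (Ioo 0 R)) (nhds 0) := by
    have hb' : ∀ᶠ r in nhdsWithin (0:ℝ) (Ioo 0 R), |g r| ≤ C * r := by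
      filter_upwards [self_mem_nhdsWithin] with r hr using hb r hr
    have hCr : Filter.Tendsto (fun r : ℝ => C * r) (nhdsWithin 0 (Ioo 0 R)) (nhds 0) := by
      have : Filter.Tendsto (fun r : ℝ => C * r) (nhds 0) (nhds (C * 0)) :=
        (continuous_const.mul continuous_id).tendsto 0
      simpa using this.mono_left nhdsWithin_le_nhds
    have hlow : Filter.Tendsto (fun r : ℝ => -(C * r)) (nhdsWithin 0 (Ioo 0 R)) (nhds 0) := by
      simpa using hCr.neg
    refine tendsto_of_tendsto_of_tendsto_of_le_of_le' hlow hCr ?_ ?_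
    · filter_upwards [hb'] with r hr using neg_le_of_abs_le hr
    · filter_upwards [hb'] with r hr using le_of_abs_le hr
  exact tendsto_nhds_unique h1 h2

def Pfun (ψ : ℝ → ℝ → ℝ) (r z : ℝ) : ℝ :=
  2 * qdr ψ r z * qdz (qdz ψ) r z * r + 3 * qdr ψ r z ^ 2 - 2 * qdz ψ r z ^ 2

def Qfun (ψ : ℝ → ℝ → ℝ) (r z : ℝ) : ℝ :=
  qdr ψ r z * (4 * qdz ψ r z - 2 * qdr (qdz ψ) r z * r)

def DPfun (ψ : ℝ → ℝ → ℝ) (r z : ℝ) : ℝ :=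
  2 * (qdr (qdr ψ) r z * qdz (qdz ψ) r z * r + qdr ψ r z * qdr (qdz (qdz ψ)) r z * r
      + qdr ψ r z * qdz (qdz ψ) r z)
    + 6 * qdr ψ r z * qdr (qdr ψ) r z - 4 * qdz ψ r z * qdr (qdz ψ) r z

def DQfun (ψ : ℝ → ℝ → ℝ) (r z : ℝ) : ℝ :=
  qdr (qdz ψ) r z * (4 * qdz ψ r z - 2 * qdr (qdz ψ) r z * r)
    + qdr ψ r z * (4 * qdz (qdz ψ) r z - 2 * qdr (qdz (qdz ψ)) r z * r)

variable {ψ : ℝ → ℝ → ℝ}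

lemma hasDerivAt_P (hψ : Sm ψ) (r z : ℝ) :
    HasDerivAt (fun s => Pfun ψ s z) (DPfun ψ r z) r := by
  have h1 : HasDerivAt (fun s => qdr ψ s z) (qdr (qdr ψ) r z) r :=
    hasDerivAt_qdr (contDiff_qdr hψ) r z
  have h2 : HasDerivAt (fun s => qdz (qdz ψ) s z) (qdr (qdz (qdz ψ)) r z) r :=
    hasDerivAt_qdr (contDiff_qdz (contDiff_qdz hψ)) r z
  have h3 : HasDerivAt (fun s => qdz ψ s z) (qdr (qdz ψ) r z) r :=
    hasDerivAt_qdr (contDiff_qdz hψ) r z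
  have H := ((((h1.const_mul (2:ℝ)).mul h2).mul (hasDerivAt_id r)).add
      ((h1.pow 2).const_mul (3:ℝ))).sub ((h3.pow 2).const_mul (2:ℝ))
  refine H.congr_deriv ?_
  simp only [DPfun, id, Pi.mul_apply]; ring

lemma hasDerivAt_Q (hψ : Sm ψ) (r z : ℝ) :
    HasDerivAt (fun t => Qfun ψ r t) (DQfun ψ r z) z := by
  have h1 : HasDerivAt (fun t => qdr ψ r t) (qdz (qdr ψ) r z) z :=
    hasDerivAt_qdz (contDiff_qdr hψ) r z
  have h2 : HasDerivAt (fun t => qdz ψ r t) (qdz (qdz ψ) r z) z :=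
    hasDerivAt_qdz (contDiff_qdz hψ) r z
  have h3 : HasDerivAt (fun t => qdr (qdz ψ) r t) (qdz (qdr (qdz ψ)) r z) z :=
    hasDerivAt_qdz (contDiff_qdr (contDiff_qdz hψ)) r z
  have H := h1.mul ((h2.const_mul (4:ℝ)).sub ((h3.const_mul (2:ℝ)).mul_const r))
  refine H.congr_deriv ?_
  rw [DQfun, ← qdr_qdz_comm hψ r z, ← qdr_qdz_comm (contDiff_qdz hψ) r z]
  rfl

lemma Sm.cont (hw : Sm w) : Continuous (fun q : ℝ × ℝ => w q.1 q.2) := (hw 0).continuous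

lemma continuous_DP (hψ : Sm ψ) : Continuous fun q : ℝ × ℝ => DPfun ψ q.1 q.2 := by
  have c1 := (contDiff_qdr (contDiff_qdr hψ)).cont
  have c2 := (contDiff_qdz (contDiff_qdz hψ)).cont
  have c3 := (contDiff_qdr hψ).cont
  have c4 := (contDiff_qdr (contDiff_qdz (contDiff_qdz hψ))).cont
  have c5 := (contDiff_qdz hψ).cont
  have c6 := (contDiff_qdr (contDiff_qdz hψ)).cont
  simp only [DPfun]; fun_prop

lemma continuous_DQ (hψ : Sm ψ) : Continuous fun q : ℝ × ℝ => DQfun ψ q.1 q.2 := by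
  have c1 := (contDiff_qdr (contDiff_qdz hψ)).cont
  have c2 := (contDiff_qdz hψ).cont
  have c3 := (contDiff_qdr hψ).cont
  have c4 := (contDiff_qdz (contDiff_qdz hψ)).cont
  have c5 := (contDiff_qdr (contDiff_qdz (contDiff_qdz hψ))).cont
  simp only [DQfun]; fun_prop

lemma integral_DP (hψ : Sm ψ) {R : ℝ} (hR : 0 < R) (z : ℝ) :
    ∫ r in Ioo (0:ℝ) R, DPfun ψ r z = Pfun ψ R z - Pfun ψ 0 z := by
  rw [← integral_Ioc_eq_integral_Ioo, ← intervalIntegral.integral_of_le hR.le]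
  refine intervalIntegral.integral_eq_sub_of_hasDerivAt (fun x _ => hasDerivAt_P hψ x z) ?_
  exact ((continuous_DP hψ).comp (continuous_id.prodMk continuous_const)).intervalIntegrable 0 R

lemma integral_DQ (hψ : Sm ψ) {a : ℝ} (ha : 0 < a) (r : ℝ) :
    ∫ z in Ioo (-a) a, DQfun ψ r z = Qfun ψ r a - Qfun ψ r (-a) := by
  rw [← integral_Ioc_eq_integral_Ioo, ← intervalIntegral.integral_of_le (by linarith : -a ≤ a)]
  refine intervalIntegral.integral_eq_sub_of_hasDerivAt (fun x _ => hasDerivAt_Q hψ r x) ?_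
  exact ((continuous_DQ hψ).comp (continuous_const.prodMk continuous_id)).intervalIntegrable _ _


variable {R a : ℝ}

lemma strip_meas : MeasurableSet (cylStrip R a) := measurableSet_Ioo.prod measurableSet_Ioo

lemma strip_subset_compact : cylStrip R a ⊆ Icc 0 R ×ˢ Icc (-a) a :=
  prod_mono Ioo_subset_Icc_self Ioo_subset_Icc_self

lemma strip_vol_lt_top : volume (cylStrip R a) < ⊤ :=
  lt_of_le_of_lt (measure_mono strip_subset_compact)
    ((isCompact_Icc.prod isCompact_Icc).measure_lt_top)

lemma integrableOn_strip_of_continuous {F : ℝ × ℝ → ℝ} (hF : Continuous F) :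
    IntegrableOn F (cylStrip R a) volume :=
  (hF.continuousOn.integrableOn_compact (isCompact_Icc.prod isCompact_Icc)).mono_set
    strip_subset_compact

lemma cyl_integral (G : ℝ × ℝ → ℝ) :
    ∫ q, G q ∂(cylMeas R a) = 2 * π * ∫ q in cylStrip R a, q.1 * G q := by
  have hmeas : Measurable fun q : ℝ × ℝ => Real.toNNReal (2 * π * q.1) :=
    (measurable_const.mul measurable_fst).real_toNNReal
  have h1 : ∫ q, G q ∂(cylMeas R a)
      = ∫ q in cylStrip R a, (Real.toNNReal (2 * π * q.1) : ℝ) • G q := by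
    rw [cylMeas]
    exact integral_withDensity_eq_integral_smul hmeas G
  rw [h1, ← integral_const_mul]
  refine setIntegral_congr_fun strip_meas fun q hq => ?_
  have hq1 : 0 < q.1 := hq.1.1
  have hpos : 0 ≤ 2 * π * q.1 := by positivity
  have : ((2 * π * q.1).toNNReal : ℝ) = 2 * π * q.1 := Real.coe_toNNReal _ hpos
  rw [smul_eq_mul, this]
  ring

lemma restrict_strip_prod :
    (volume : Measure (ℝ × ℝ)).restrict (cylStrip R a)
      = ((volume : Measure ℝ).restrict (Ioo 0 R)).prod
          ((volume : Measure ℝ).restrict (Ioo (-a) a)) := by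
  rw [cylStrip, Measure.prod_restrict]; rfl

lemma int_DP_eq (hψ : Sm ψ) (hR : 0 < R) :
    ∫ q in cylStrip R a, DPfun ψ q.1 q.2
      = ∫ z in Ioo (-a) a, (Pfun ψ R z - Pfun ψ 0 z) := by
  have hInt : Integrable (fun q : ℝ × ℝ => DPfun ψ q.1 q.2)
      (((volume : Measure ℝ).restrict (Ioo 0 R)).prod
        ((volume : Measure ℝ).restrict (Ioo (-a) a))) := by
    rw [← restrict_strip_prod]; exact integrableOn_strip_of_continuous (continuous_DP hψ)
  calc ∫ q in cylStrip R a, DPfun ψ q.1 q.2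
      = ∫ q, DPfun ψ q.1 q.2 ∂(((volume : Measure ℝ).restrict (Ioo 0 R)).prod
          ((volume : Measure ℝ).restrict (Ioo (-a) a))) := by rw [← restrict_strip_prod]
    _ = ∫ z in Ioo (-a) a, ∫ r in Ioo 0 R, DPfun ψ r z := by
        exact integral_prod_symm _ hInt
    _ = ∫ z in Ioo (-a) a, (Pfun ψ R z - Pfun ψ 0 z) := by
        exact integral_congr_ae (Filter.Eventually.of_forall fun z => integral_DP hψ hR z)

lemma int_DQ_eq (hψ : Sm ψ) (ha : 0 < a) :
    ∫ q in cylStrip R a, DQfun ψ q.1 q.2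
      = ∫ r in Ioo 0 R, (Qfun ψ r a - Qfun ψ r (-a)) := by
  have hInt : Integrable (fun q : ℝ × ℝ => DQfun ψ q.1 q.2)
      (((volume : Measure ℝ).restrict (Ioo 0 R)).prod
        ((volume : Measure ℝ).restrict (Ioo (-a) a))) := by
    rw [← restrict_strip_prod]; exact integrableOn_strip_of_continuous (continuous_DQ hψ)
  calc ∫ q in cylStrip R a, DQfun ψ q.1 q.2
      = ∫ q, DQfun ψ q.1 q.2 ∂(((volume : Measure ℝ).restrict (Ioo 0 R)).prod
          ((volume : Measure ℝ).restrict (Ioo (-a) a))) := by rw [← restrict_strip_prod]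
    _ = ∫ r in Ioo 0 R, ∫ z in Ioo (-a) a, DQfun ψ r z := by
        exact integral_prod _ hInt
    _ = ∫ r in Ioo 0 R, (Qfun ψ r a - Qfun ψ r (-a)) := by
        exact integral_congr_ae (Filter.Eventually.of_forall fun r => integral_DQ hψ ha r)

lemma integrableOn_Ioo_of_continuous {f : ℝ → ℝ} {b c : ℝ} (hf : Continuous f) :
    IntegrableOn f (Ioo b c) volume :=
  (hf.continuousOn.integrableOn_compact isCompact_Icc).mono_set Ioo_subset_Icc_self

/-- `H²` elliptic estimate for the modified stream function, Lemma 3.2: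
there is `c > 0`, depending only on the cylinder, such that
`∫_Ω (ψ₁,rr² + ψ₁,rz² + ψ₁,zz² + ψ₁,r²/r²) + ∫_{−a}^a (ψ₁,z²|_{r=0} + ψ₁,r²|_{r=R}) dz
  ≤ c |Γ|²_{2,Ω}`. -/
theorem stmt_7 (R a : ℝ) (hR : 0 < R) (ha : 0 < a) :
    ∃ c > 0, ∀ ψ Γ : ℝ → ℝ → ℝ, ModStream R a ψ Γ →
      (∫ q, ((qdr (qdr ψ) q.1 q.2) ^ 2 + (qdr (qdz ψ) q.1 q.2) ^ 2
          + (qdz (qdz ψ) q.1 q.2) ^ 2 + (qdr ψ q.1 q.2) ^ 2 / q.1 ^ 2) ∂(cylMeas R a))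
      + (∫ z in Ioo (-a) a, (qdz ψ 0 z) ^ 2)
      + (∫ z in Ioo (-a) a, (qdr ψ R z) ^ 2)
      ≤ c * ∫ q, (Γ q.1 q.2) ^ 2 ∂(cylMeas R a) := by
  refine ⟨1, one_pos, ?_⟩
  intro ψ Γ hm
  have hψ : Sm ψ := hm.smooth_ψ
  have hψr : Sm (qdr ψ) := contDiff_qdr hψ
  have hψz : Sm (qdz ψ) := contDiff_qdz hψ
  have hψrr : Sm (qdr (qdr ψ)) := contDiff_qdr hψr
  have hψrz : Sm (qdr (qdz ψ)) := contDiff_qdr hψz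
  have hψzz : Sm (qdz (qdz ψ)) := contDiff_qdz hψz
  obtain ⟨C, hC⟩ := hm.axis
  -- continuity of base functions
  have cψr := hψr.cont
  have cψz := hψz.cont
  have cψrr := hψrr.cont
  have cψrz := hψrz.cont
  have cψzz := hψzz.cont
  -- the quotient function
  set quot : ℝ × ℝ → ℝ := fun q => (qdr ψ q.1 q.2) ^ 2 / q.1 ^ 2 with hquotdef
  have hContOn_quot : ContinuousOn quot (cylStrip R a) := by
    refine ContinuousOn.div (cψr.pow 2).continuousOn (continuous_fst.pow 2).continuousOn ?_
    exact fun q hq => pow_ne_zero 2 (ne_of_gt hq.1.1)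
  have hquot_nonneg : ∀ q : ℝ × ℝ, 0 ≤ quot q := fun q =>
    div_nonneg (sq_nonneg _) (sq_nonneg _)
  have hquot_le : ∀ q ∈ cylStrip R a, quot q ≤ C ^ 2 := by
    intro q hq
    have h1 : 0 < q.1 := hq.1.1
    have habs := (hC q.1 ⟨h1, hq.1.2⟩ q.2 (Ioo_subset_Icc_self hq.2)).1
    rw [hquotdef]
    rw [div_le_iff₀ (by positivity)]
    have h2 := mul_self_le_mul_self (abs_nonneg (qdr ψ q.1 q.2)) habs
    nlinarith [sq_abs (qdr ψ q.1 q.2)]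
  -- integrability of the quotient piece
  have hInt_qquot : IntegrableOn (fun q : ℝ × ℝ => q.1 * quot q) (cylStrip R a) volume := by
    refine Integrable.mono' (g := fun _ => R * C ^ 2)
      (integrableOn_const strip_vol_lt_top.ne)
      ((continuous_fst.continuousOn.mul hContOn_quot).aestronglyMeasurable strip_meas) ?_
    filter_upwards [ae_restrict_mem strip_meas] with q hq
    have h1 : 0 < q.1 := hq.1.1
    rw [Real.norm_eq_abs, abs_of_nonneg (mul_nonneg h1.le (hquot_nonneg q))]
    exact mul_le_mul hq.1.2.le (hquot_le q hq) (hquot_nonneg q) hR.le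
  -- integrability of the weighted integrands
  have hInt_cont : IntegrableOn (fun q : ℝ × ℝ =>
      q.1 * ((qdr (qdr ψ) q.1 q.2) ^ 2 + (qdr (qdz ψ) q.1 q.2) ^ 2
        + (qdz (qdz ψ) q.1 q.2) ^ 2)) (cylStrip R a) volume :=
    integrableOn_strip_of_continuous (by fun_prop)
  have hInt_qf0 : IntegrableOn (fun q : ℝ × ℝ =>
      q.1 * ((qdr (qdr ψ) q.1 q.2) ^ 2 + (qdr (qdz ψ) q.1 q.2) ^ 2
        + (qdz (qdz ψ) q.1 q.2) ^ 2 + (qdr ψ q.1 q.2) ^ 2 / q.1 ^ 2))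
      (cylStrip R a) volume := by
    have hsum : (fun q : ℝ × ℝ =>
        q.1 * ((qdr (qdr ψ) q.1 q.2) ^ 2 + (qdr (qdz ψ) q.1 q.2) ^ 2
          + (qdz (qdz ψ) q.1 q.2) ^ 2 + (qdr ψ q.1 q.2) ^ 2 / q.1 ^ 2))
        = fun q : ℝ × ℝ =>
        (q.1 * ((qdr (qdr ψ) q.1 q.2) ^ 2 + (qdr (qdz ψ) q.1 q.2) ^ 2
          + (qdz (qdz ψ) q.1 q.2) ^ 2)) + (q.1 * quot q) := by
      funext q; rw [hquotdef]; ring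
    rw [hsum]
    exact hInt_cont.add hInt_qquot
  have hInt_qg0 : IntegrableOn (fun q : ℝ × ℝ =>
      q.1 * ((qdr (qdr ψ) q.1 q.2) ^ 2 + 2 * (qdr (qdz ψ) q.1 q.2) ^ 2
        + (qdz (qdz ψ) q.1 q.2) ^ 2 + 9 * ((qdr ψ q.1 q.2) ^ 2 / q.1 ^ 2)))
      (cylStrip R a) volume := by
    have hsum : (fun q : ℝ × ℝ =>
        q.1 * ((qdr (qdr ψ) q.1 q.2) ^ 2 + 2 * (qdr (qdz ψ) q.1 q.2) ^ 2
          + (qdz (qdz ψ) q.1 q.2) ^ 2 + 9 * ((qdr ψ q.1 q.2) ^ 2 / q.1 ^ 2)))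
        = fun q : ℝ × ℝ =>
        (q.1 * ((qdr (qdr ψ) q.1 q.2) ^ 2 + (qdr (qdz ψ) q.1 q.2) ^ 2
          + (qdz (qdz ψ) q.1 q.2) ^ 2))
          + ((q.1 * ((qdr (qdz ψ) q.1 q.2) ^ 2)) + (9 : ℝ) * (q.1 * quot q)) := by
      funext q; rw [hquotdef]; ring
    rw [hsum]
    exact hInt_cont.add ((integrableOn_strip_of_continuous (by fun_prop)).add
      (hInt_qquot.const_mul 9))
  have hInt_DP : IntegrableOn (fun q : ℝ × ℝ => DPfun ψ q.1 q.2) (cylStrip R a) volume :=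
    integrableOn_strip_of_continuous (continuous_DP hψ)
  have hInt_DQ : IntegrableOn (fun q : ℝ × ℝ => DQfun ψ q.1 q.2) (cylStrip R a) volume :=
    integrableOn_strip_of_continuous (continuous_DQ hψ)
  -- the pointwise identity on the strip
  have key : EqOn (fun q : ℝ × ℝ => q.1 * (Γ q.1 q.2) ^ 2)
      (fun q : ℝ × ℝ =>
        q.1 * ((qdr (qdr ψ) q.1 q.2) ^ 2 + 2 * (qdr (qdz ψ) q.1 q.2) ^ 2
          + (qdz (qdz ψ) q.1 q.2) ^ 2 + 9 * ((qdr ψ q.1 q.2) ^ 2 / q.1 ^ 2))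
          + (DPfun ψ q.1 q.2 + DQfun ψ q.1 q.2)) (cylStrip R a) := by
    rintro ⟨r, z⟩ hq
    have hr : (0:ℝ) < r := hq.1.1
    have hr' : r ≠ 0 := ne_of_gt hr
    have heq := hm.eqn r z hq
    simp only [DPfun, DQfun]
    rw [← heq]
    field_simp
    ring
  -- the divergence theorem computation
  have hDPval : ∫ q in cylStrip R a, DPfun ψ q.1 q.2
      = 3 * (∫ z in Ioo (-a) a, (qdr ψ R z) ^ 2)
        + 2 * (∫ z in Ioo (-a) a, (qdz ψ 0 z) ^ 2) := by
    rw [int_DP_eq hψ hR]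
    have hψzR : ∀ y ∈ Ioo (-a) a, qdz ψ R y = 0 := fun y hy =>
      deriv_eq_zero_of_eventually isOpen_Ioo hy
        (fun t ht => hm.ψ_lat t (Ioo_subset_Icc_self ht))
    have heval : EqOn (fun z => Pfun ψ R z - Pfun ψ 0 z)
        (fun z => 3 * (qdr ψ R z) ^ 2 + 2 * (qdz ψ 0 z) ^ 2) (Ioo (-a) a) := by
      intro z hz
      have h1 : qdz ψ R z = 0 := hψzR z hz
      have h2 : qdz (qdz ψ) R z = 0 :=
        deriv_eq_zero_of_eventually isOpen_Ioo hz (fun y hy => hψzR y hy)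
      have h3 : qdr ψ 0 z = 0 := by
        refine eq_zero_at_zero_of_bound (g := fun r => qdr ψ r z) (C := C) ?_ hR ?_
        · exact cψr.comp (continuous_id.prodMk continuous_const)
        · exact fun r hrm => (hC r hrm z (Ioo_subset_Icc_self hz)).1
      simp only [Pfun, h1, h2, h3]
      ring
    rw [setIntegral_congr_fun measurableSet_Ioo heval]
    rw [integral_add, integral_const_mul, integral_const_mul]
    · exact (integrableOn_Ioo_of_continuous
        (by fun_prop)).const_mul 3
    · exact (integrableOn_Ioo_of_continuous
        (by fun_prop)).const_mul 2
  have hDQval : ∫ q in cylStrip R a, DQfun ψ q.1 q.2 = 0 := by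
    rw [int_DQ_eq hψ ha]
    have heval : EqOn (fun r => Qfun ψ r a - Qfun ψ r (-a))
        (fun _ => (0:ℝ)) (Ioo 0 R) := by
      intro r hrm
      have h1 : qdr ψ r a = 0 :=
        deriv_eq_zero_of_eventually isOpen_Ioo hrm
          (fun s hs => (hm.ψ_top s (Ioo_subset_Icc_self hs)).1)
      have h2 : qdr ψ r (-a) = 0 :=
        deriv_eq_zero_of_eventually isOpen_Ioo hrm
          (fun s hs => (hm.ψ_top s (Ioo_subset_Icc_self hs)).2)
      simp [Qfun, h1, h2]
    rw [setIntegral_congr_fun measurableSet_Ioo heval]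
    simp
  -- measure identity
  have hBig : ∫ q in cylStrip R a, q.1 * (Γ q.1 q.2) ^ 2
      = (∫ q in cylStrip R a,
          q.1 * ((qdr (qdr ψ) q.1 q.2) ^ 2 + 2 * (qdr (qdz ψ) q.1 q.2) ^ 2
            + (qdz (qdz ψ) q.1 q.2) ^ 2 + 9 * ((qdr ψ q.1 q.2) ^ 2 / q.1 ^ 2)))
        + (3 * (∫ z in Ioo (-a) a, (qdr ψ R z) ^ 2)
            + 2 * (∫ z in Ioo (-a) a, (qdz ψ 0 z) ^ 2)) := by
    have hInt_DPQ : IntegrableOn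
        (fun q : ℝ × ℝ => DPfun ψ q.1 q.2 + DQfun ψ q.1 q.2) (cylStrip R a) volume :=
      hInt_DP.add hInt_DQ
    have e1 : ∫ q in cylStrip R a,
        (q.1 * ((qdr (qdr ψ) q.1 q.2) ^ 2 + 2 * (qdr (qdz ψ) q.1 q.2) ^ 2
          + (qdz (qdz ψ) q.1 q.2) ^ 2 + 9 * ((qdr ψ q.1 q.2) ^ 2 / q.1 ^ 2))
          + (DPfun ψ q.1 q.2 + DQfun ψ q.1 q.2))
        = (∫ q in cylStrip R a,
            q.1 * ((qdr (qdr ψ) q.1 q.2) ^ 2 + 2 * (qdr (qdz ψ) q.1 q.2) ^ 2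
              + (qdz (qdz ψ) q.1 q.2) ^ 2 + 9 * ((qdr ψ q.1 q.2) ^ 2 / q.1 ^ 2)))
          + ∫ q in cylStrip R a, (DPfun ψ q.1 q.2 + DQfun ψ q.1 q.2) :=
      integral_add hInt_qg0 hInt_DPQ
    have e2 : ∫ q in cylStrip R a, (DPfun ψ q.1 q.2 + DQfun ψ q.1 q.2)
        = (∫ q in cylStrip R a, DPfun ψ q.1 q.2)
          + ∫ q in cylStrip R a, DQfun ψ q.1 q.2 :=
      integral_add hInt_DP hInt_DQ
    rw [setIntegral_congr_fun strip_meas key, e1, e2, hDPval, hDQval]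
    ring
  -- monotonicity of the weighted integrand
  have hAB : (∫ q in cylStrip R a,
        q.1 * ((qdr (qdr ψ) q.1 q.2) ^ 2 + (qdr (qdz ψ) q.1 q.2) ^ 2
          + (qdz (qdz ψ) q.1 q.2) ^ 2 + (qdr ψ q.1 q.2) ^ 2 / q.1 ^ 2))
      ≤ (∫ q in cylStrip R a,
        q.1 * ((qdr (qdr ψ) q.1 q.2) ^ 2 + 2 * (qdr (qdz ψ) q.1 q.2) ^ 2
          + (qdz (qdz ψ) q.1 q.2) ^ 2 + 9 * ((qdr ψ q.1 q.2) ^ 2 / q.1 ^ 2))) := by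
    refine setIntegral_mono_on hInt_qf0 hInt_qg0 strip_meas fun q hq => ?_
    have h1 : 0 < q.1 := hq.1.1
    have h2 : 0 ≤ (qdr ψ q.1 q.2) ^ 2 / q.1 ^ 2 := hquot_nonneg q
    have h3 : 0 ≤ (qdr (qdz ψ) q.1 q.2) ^ 2 := sq_nonneg _
    refine mul_le_mul_of_nonneg_left ?_ h1.le
    nlinarith
  have hT2 : 0 ≤ ∫ z in Ioo (-a) a, (qdz ψ 0 z) ^ 2 :=
    integral_nonneg fun z => sq_nonneg _
  have hT3 : 0 ≤ ∫ z in Ioo (-a) a, (qdr ψ R z) ^ 2 :=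
    integral_nonneg fun z => sq_nonneg _
  -- conversion of the cylinder integrals and conclusion
  rw [cyl_integral, cyl_integral, hBig]
  set A := ∫ q in cylStrip R a,
      q.1 * ((qdr (qdr ψ) q.1 q.2) ^ 2 + (qdr (qdz ψ) q.1 q.2) ^ 2
        + (qdz (qdz ψ) q.1 q.2) ^ 2 + (qdr ψ q.1 q.2) ^ 2 / q.1 ^ 2) with hA
  set B := ∫ q in cylStrip R a,
      q.1 * ((qdr (qdr ψ) q.1 q.2) ^ 2 + 2 * (qdr (qdz ψ) q.1 q.2) ^ 2
        + (qdz (qdz ψ) q.1 q.2) ^ 2 + 9 * ((qdr ψ q.1 q.2) ^ 2 / q.1 ^ 2)) with hB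
  set T2 := ∫ z in Ioo (-a) a, (qdz ψ 0 z) ^ 2 with hT2d
  set T3 := ∫ z in Ioo (-a) a, (qdr ψ R z) ^ 2 with hT3d
  have hπ : (3:ℝ) < π := pi_gt_three
  have k1 : 2 * π * A ≤ 2 * π * B := by
    refine mul_le_mul_of_nonneg_left hAB (by positivity)
  have k2 : 0 ≤ (4 * π - 1) * T2 := mul_nonneg (by nlinarith) hT2
  have k3 : 0 ≤ (6 * π - 1) * T3 := mul_nonneg (by nlinarith) hT3
  nlinarith [k1, k2, k3]
end
end

section
/- Let ψ₁ be the modified stream function, i.e. an axially symmetric smooth solution of −ψ_{1,rr} − (3/r)ψ_{1,r} − ψ_{1,zz} = Γ in Ω with ψ₁ = 0 on S, where Γ is axially symmetric, smooth, and vanishes on S, and ψ₁ admits the expansion ψ₁ = d₁(z) + d₂(z)r² + … near the axis. Then there is a constant c > 0 such that ∫_Ω (ψ_{1,rrz}² + ψ_{1,rzz}² + ψ_{1,zzz}²) dx + ∫_{−a}^{a} ψ_{1,zz}²|_{r=0} dz + ∫_{−a}^{a} ψ_{1,rz}²|_{r=R} dz ≤ c |Γ_{,z}|²_{2,Ω}.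 -/
open MeasureTheory Real Set
open scoped ENNReal

noncomputable section

def sm : WithTop ℕ∞ := (⊤ : ℕ∞)

lemma sm1 : 1 ≤ sm := by
  rw [sm]; exact_mod_cast le_top

lemma sm_add : sm + 1 ≤ sm := by
  rw [sm]
  exact_mod_cast le_top

/-- partial derivative in the first coordinate -/
def p1 (G : ℝ × ℝ → ℝ) : ℝ × ℝ → ℝ := fun q => fderiv ℝ G q (1, 0)
/-- partial derivative in the second coordinate -/
def p2 (G : ℝ × ℝ → ℝ) : ℝ × ℝ → ℝ := fun q => fderiv ℝ G q (0, 1)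

lemma hasDerivAt_p1 {G : ℝ × ℝ → ℝ} (hG : ContDiff ℝ sm G) (r z : ℝ) :
    HasDerivAt (fun s => G (s, z)) (p1 G (r, z)) r := by
  have hF : HasFDerivAt G (fderiv ℝ G (r, z)) (r, z) :=
    (hG.differentiable (zero_lt_one.trans_le sm1).ne').differentiableAt.hasFDerivAt
  have hline : HasDerivAt (fun s : ℝ => (s, z)) ((1 : ℝ), (0 : ℝ)) r :=
    (hasDerivAt_id r).prodMk (hasDerivAt_const r z)
  exact hF.comp_hasDerivAt r hline

lemma hasDerivAt_p2 {G : ℝ × ℝ → ℝ} (hG : ContDiff ℝ sm G) (r z : ℝ) :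
    HasDerivAt (fun t => G (r, t)) (p2 G (r, z)) z := by
  have hF : HasFDerivAt G (fderiv ℝ G (r, z)) (r, z) :=
    (hG.differentiable (zero_lt_one.trans_le sm1).ne').differentiableAt.hasFDerivAt
  have hline : HasDerivAt (fun t : ℝ => (r, t)) ((0 : ℝ), (1 : ℝ)) z :=
    (hasDerivAt_const z r).prodMk (hasDerivAt_id z)
  exact hF.comp_hasDerivAt z hline

lemma contDiff_p1 {G : ℝ × ℝ → ℝ} (hG : ContDiff ℝ sm G) : ContDiff ℝ sm (p1 G) :=
  (hG.fderiv_right sm_add).clm_apply contDiff_const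

lemma contDiff_p2 {G : ℝ × ℝ → ℝ} (hG : ContDiff ℝ sm G) : ContDiff ℝ sm (p2 G) :=
  (hG.fderiv_right sm_add).clm_apply contDiff_const

lemma p1p2_swap {G : ℝ × ℝ → ℝ} (hG : ContDiff ℝ sm G) : p1 (p2 G) = p2 (p1 G) := by
  funext q
  have hd : ContDiff ℝ sm (fderiv ℝ G) := hG.fderiv_right sm_add
  have hΦ : HasFDerivAt (fderiv ℝ G) (fderiv ℝ (fderiv ℝ G) q) q :=
    (hd.differentiable (zero_lt_one.trans_le sm1).ne').differentiableAt.hasFDerivAt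
  have h2 : ∀ v : ℝ × ℝ, HasFDerivAt (fun x => fderiv ℝ G x v)
      ((ContinuousLinearMap.apply ℝ ℝ v).comp (fderiv ℝ (fderiv ℝ G) q)) q := by
    intro v
    exact (ContinuousLinearMap.apply ℝ ℝ v).hasFDerivAt.comp q hΦ
  have e1 : p1 (p2 G) q = fderiv ℝ (fderiv ℝ G) q (1, 0) (0, 1) := by
    have h := (h2 (0, 1)).fderiv
    show fderiv ℝ (fun x => fderiv ℝ G x (0, 1)) q (1, 0) = _
    rw [h]; rfl
  have e2 : p2 (p1 G) q = fderiv ℝ (fderiv ℝ G) q (0, 1) (1, 0) := by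
    have h := (h2 (1, 0)).fderiv
    show fderiv ℝ (fun x => fderiv ℝ G x (1, 0)) q (0, 1) = _
    rw [h]; rfl
  have hsymm := second_derivative_symmetric
    (f := G) (f' := fderiv ℝ G)
    (fun y => (hG.differentiable (zero_lt_one.trans_le sm1).ne').differentiableAt.hasFDerivAt (x := y))
    hΦ ((1 : ℝ), (0 : ℝ)) ((0 : ℝ), (1 : ℝ))
  rw [e1, e2, hsymm]


lemma p1_eq_deriv {G : ℝ × ℝ → ℝ} (hG : ContDiff ℝ sm G) (r z : ℝ) :
    p1 G (r, z) = deriv (fun s => G (s, z)) r := ((hasDerivAt_p1 hG r z).deriv).symm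

lemma p2_eq_deriv {G : ℝ × ℝ → ℝ} (hG : ContDiff ℝ sm G) (r z : ℝ) :
    p2 G (r, z) = deriv (fun t => G (r, t)) z := ((hasDerivAt_p2 hG r z).deriv).symm

lemma deriv_zero_of_eventually {f : ℝ → ℝ} {s : Set ℝ} (hs : IsOpen s) {x : ℝ} (hx : x ∈ s)
    (h0 : ∀ y ∈ s, f y = 0) : deriv f x = 0 := by
  have h : f =ᶠ[nhds x] fun _ => (0 : ℝ) := Filter.eventually_of_mem (hs.mem_nhds hx) h0
  rw [h.deriv_eq, deriv_const]

/-- `ψ_zz = 0` on the lateral boundary. -/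
lemma w_lat {R a : ℝ} {F : ℝ × ℝ → ℝ} (hF : ContDiff ℝ sm F)
    (hFlat : ∀ z ∈ Icc (-a) a, F (R, z) = 0) :
    ∀ z ∈ Ioo (-a) a, p2 (p2 F) (R, z) = 0 := by
  have h1 : ∀ t ∈ Ioo (-a) a, p2 F (R, t) = 0 := by
    intro t ht
    rw [p2_eq_deriv hF]
    exact deriv_zero_of_eventually isOpen_Ioo ht
      (fun y hy => hFlat y (Ioo_subset_Icc_self hy))
  intro z hz
  rw [p2_eq_deriv (contDiff_p2 hF)]
  exact deriv_zero_of_eventually isOpen_Ioo hz h1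

/-- `ψ_zz = 0` on the top and bottom boundaries. -/
lemma w_top {R a : ℝ} (hR : 0 < R) (ha : 0 < a) {F G : ℝ × ℝ → ℝ}
    (hF : ContDiff ℝ sm F) (hG : ContDiff ℝ sm G)
    (heqn : ∀ q ∈ cylStrip R a, -(p1 (p1 F) q) - (3 / q.1) * p1 F q - p2 (p2 F) q = G q)
    (hFtop : ∀ r ∈ Icc (0:ℝ) R, F (r, a) = 0 ∧ F (r, -a) = 0)
    (hGtop : ∀ r ∈ Icc (0:ℝ) R, G (r, a) = 0 ∧ G (r, -a) = 0) :
    ∀ r ∈ Ioo (0:ℝ) R, p2 (p2 F) (r, a) = 0 ∧ p2 (p2 F) (r, -a) = 0 := by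
  have hpa : ∀ r ∈ Ioo (0:ℝ) R, p1 F (r, a) = 0 := by
    intro r hr; rw [p1_eq_deriv hF]
    exact deriv_zero_of_eventually isOpen_Ioo hr
      (fun y hy => (hFtop y (Ioo_subset_Icc_self hy)).1)
  have hpb : ∀ r ∈ Ioo (0:ℝ) R, p1 F (r, -a) = 0 := by
    intro r hr; rw [p1_eq_deriv hF]
    exact deriv_zero_of_eventually isOpen_Ioo hr
      (fun y hy => (hFtop y (Ioo_subset_Icc_self hy)).2)
  have hppa : ∀ r ∈ Ioo (0:ℝ) R, p1 (p1 F) (r, a) = 0 := by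
    intro r hr; rw [p1_eq_deriv (contDiff_p1 hF)]
    exact deriv_zero_of_eventually isOpen_Ioo hr hpa
  have hppb : ∀ r ∈ Ioo (0:ℝ) R, p1 (p1 F) (r, -a) = 0 := by
    intro r hr; rw [p1_eq_deriv (contDiff_p1 hF)]
    exact deriv_zero_of_eventually isOpen_Ioo hr hpb
  set K : ℝ × ℝ → ℝ := fun q =>
    q.1 * p1 (p1 F) q + 3 * p1 F q + q.1 * p2 (p2 F) q + q.1 * G q with hK_def
  have hK0 : EqOn K (fun _ => (0:ℝ)) (cylStrip R a) := by
    intro q hq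
    have hq1 : 0 < q.1 := hq.1.1
    have h := heqn q hq
    simp only [hK_def]
    have : G q = -(p1 (p1 F) q) - (3 / q.1) * p1 F q - p2 (p2 F) q := h.symm
    rw [this]
    field_simp
    ring
  have hKc : Continuous K := by
    have c1 := (contDiff_p1 (contDiff_p1 hF)).continuous
    have c2 := (contDiff_p1 hF).continuous
    have c3 := (contDiff_p2 (contDiff_p2 hF)).continuous
    have c4 := hG.continuous
    rw [hK_def]
    exact (((continuous_fst.mul c1).add (continuous_const.mul c2)).add
      (continuous_fst.mul c3)).add (continuous_fst.mul c4)
  have hKcl : EqOn K (fun _ => (0:ℝ)) (closure (cylStrip R a)) :=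
    hK0.closure hKc continuous_const
  have hclosure : closure (cylStrip R a) = Icc 0 R ×ˢ Icc (-a) a := by
    rw [cylStrip, closure_prod_eq, closure_Ioo hR.ne, closure_Ioo (by linarith : -a ≠ a)]
  intro r hr
  have hrIcc : r ∈ Icc (0:ℝ) R := Ioo_subset_Icc_self hr
  have hra : (r, a) ∈ closure (cylStrip R a) := by
    rw [hclosure]; exact ⟨hrIcc, right_mem_Icc.2 (by linarith)⟩
  have hrb : (r, -a) ∈ closure (cylStrip R a) := by
    rw [hclosure]; exact ⟨hrIcc, left_mem_Icc.2 (by linarith)⟩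
  have ha' := hKcl hra
  have hb' := hKcl hrb
  simp only [hK_def] at ha' hb'
  rw [hppa r hr, hpa r hr, (hGtop r hrIcc).1] at ha'
  rw [hppb r hr, hpb r hr, (hGtop r hrIcc).2] at hb'
  constructor
  · have : r * p2 (p2 F) (r, a) = 0 := by linarith [ha']
    exact (mul_eq_zero.1 this).resolve_left hr.1.ne'
  · have : r * p2 (p2 F) (r, -a) = 0 := by linarith [hb']
    exact (mul_eq_zero.1 this).resolve_left hr.1.ne'

/-- `ψ_rz = 0` on the axis. -/
lemma v_axis {R a : ℝ} (hR : 0 < R) {F : ℝ × ℝ → ℝ} (hF : ContDiff ℝ sm F)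
    (haxis : ∃ C : ℝ, ∀ r ∈ Ioo (0:ℝ) R, ∀ z ∈ Icc (-a) a, |p1 (p2 F) (r, z)| ≤ C * r) :
    ∀ z ∈ Icc (-a) a, p1 (p2 F) (0, z) = 0 := by
  obtain ⟨C, hC⟩ := haxis
  intro z hz
  have hcont : Continuous fun r : ℝ => p1 (p2 F) (r, z) :=
    (contDiff_p1 (contDiff_p2 hF)).continuous.comp (continuous_id.prodMk continuous_const)
  have hne : (nhdsWithin (0:ℝ) (Ioo 0 R)).NeBot := by
    apply mem_closure_iff_nhdsWithin_neBot.1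
    rw [closure_Ioo hR.ne]
    exact left_mem_Icc.2 hR.le
  have T1 : Filter.Tendsto (fun r : ℝ => p1 (p2 F) (r, z)) (nhdsWithin 0 (Ioo 0 R))
      (nhds (p1 (p2 F) (0, z))) :=
    (hcont.tendsto 0).mono_left nhdsWithin_le_nhds
  have T2 : Filter.Tendsto (fun r : ℝ => p1 (p2 F) (r, z)) (nhdsWithin 0 (Ioo 0 R))
      (nhds 0) := by
    apply squeeze_zero_norm' (a := fun r => C * r)
    · filter_upwards [self_mem_nhdsWithin] with r hr
      rw [Real.norm_eq_abs]
      exact hC r hr z hz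
    · have : Filter.Tendsto (fun r : ℝ => C * r) (nhds 0) (nhds (C * 0)) :=
        (continuous_const.mul continuous_id).tendsto 0
      rw [mul_zero] at this
      exact this.mono_left nhdsWithin_le_nhds
  exact tendsto_nhds_unique T1 T2

lemma measurableSet_cylStrip (R a : ℝ) : MeasurableSet (cylStrip R a) :=
  measurableSet_Ioo.prod measurableSet_Ioo

/-- Integration against `cylMeas` as a weighted set integral. -/
lemma integ_cyl (R a : ℝ) (g : ℝ × ℝ → ℝ) :
    ∫ q, g q ∂(cylMeas R a) = ∫ q in cylStrip R a, (2 * π * q.1) * g q := by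
  rw [cylMeas]
  have hmeas : Measurable fun q : ℝ × ℝ => (2 * π * q.1).toNNReal :=
    (measurable_const.mul measurable_fst).real_toNNReal
  have hd : (fun q : ℝ × ℝ => ENNReal.ofReal (2 * π * q.1))
      = fun q : ℝ × ℝ => ((2 * π * q.1).toNNReal : ℝ≥0∞) := rfl
  rw [hd, integral_withDensity_eq_integral_smul hmeas]
  apply setIntegral_congr_fun (measurableSet_cylStrip R a)
  intro q hq
  have hq1 : 0 < q.1 := hq.1.1
  have hpos : 0 ≤ 2 * π * q.1 := by positivity
  simp [NNReal.smul_def, Real.coe_toNNReal _ hpos]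

/-- Continuous functions are integrable on the strip. -/
lemma integrableOn_strip {R a : ℝ} {g : ℝ × ℝ → ℝ} (hg : Continuous g) :
    IntegrableOn g (cylStrip R a) volume := by
  have h : IntegrableOn g (Icc 0 R ×ˢ Icc (-a) a) volume :=
    hg.continuousOn.integrableOn_compact (isCompact_Icc.prod isCompact_Icc)
  exact h.mono_set (prod_mono Ioo_subset_Icc_self Ioo_subset_Icc_self)

lemma iter_r_outer {R a : ℝ} {g : ℝ × ℝ → ℝ} (hg : Continuous g) :
    ∫ q in cylStrip R a, g q = ∫ r in Ioo 0 R, ∫ z in Ioo (-a) a, g (r, z) := by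
  have h : IntegrableOn g (Ioo 0 R ×ˢ Ioo (-a) a)
      ((volume : Measure ℝ).prod (volume : Measure ℝ)) := by
    rw [← Measure.volume_eq_prod ℝ ℝ]; exact integrableOn_strip hg
  rw [cylStrip, Measure.volume_eq_prod ℝ ℝ]
  exact setIntegral_prod g h

lemma iter_z_outer {R a : ℝ} {g : ℝ × ℝ → ℝ} (hg : Continuous g) :
    ∫ q in cylStrip R a, g q = ∫ z in Ioo (-a) a, ∫ r in Ioo 0 R, g (r, z) := by
  have h : IntegrableOn g (Ioo 0 R ×ˢ Ioo (-a) a)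
      ((volume : Measure ℝ).prod (volume : Measure ℝ)) := by
    rw [← Measure.volume_eq_prod ℝ ℝ]; exact integrableOn_strip hg
  rw [cylStrip, Measure.volume_eq_prod ℝ ℝ, ← Measure.prod_restrict]
  refine integral_prod_symm g ?_
  rw [Measure.prod_restrict]
  exact h.integrable

/-- convert a set integral over `Ioo` to an interval integral. -/
lemma ioo_eq_interval {c d : ℝ} (h : c ≤ d) (f : ℝ → ℝ) :
    ∫ x in Ioo c d, f x = ∫ x in c..d, f x := by
  rw [intervalIntegral.integral_of_le h, integral_Ioc_eq_integral_Ioo]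

/-- `ψ_rz` as an uncurried function -/
def vF (F : ℝ × ℝ → ℝ) : ℝ × ℝ → ℝ := p1 (p2 F)
/-- `ψ_zz` -/
def wF (F : ℝ × ℝ → ℝ) : ℝ × ℝ → ℝ := p2 (p2 F)
/-- `ψ_rrz` -/
def AF (F : ℝ × ℝ → ℝ) : ℝ × ℝ → ℝ := p1 (vF F)
/-- `ψ_rzz` -/
def BF (F : ℝ × ℝ → ℝ) : ℝ × ℝ → ℝ := p1 (wF F)
/-- `ψ_zzz` -/
def CF (F : ℝ × ℝ → ℝ) : ℝ × ℝ → ℝ := p2 (wF F)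
/-- `ψ_rrzz` -/
def DF (F : ℝ × ℝ → ℝ) : ℝ × ℝ → ℝ := p2 (AF F)

lemma smooth_vF {F : ℝ × ℝ → ℝ} (hF : ContDiff ℝ sm F) : ContDiff ℝ sm (vF F) :=
  contDiff_p1 (contDiff_p2 hF)
lemma smooth_wF {F : ℝ × ℝ → ℝ} (hF : ContDiff ℝ sm F) : ContDiff ℝ sm (wF F) :=
  contDiff_p2 (contDiff_p2 hF)
lemma smooth_AF {F : ℝ × ℝ → ℝ} (hF : ContDiff ℝ sm F) : ContDiff ℝ sm (AF F) :=
  contDiff_p1 (smooth_vF hF)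
lemma smooth_BF {F : ℝ × ℝ → ℝ} (hF : ContDiff ℝ sm F) : ContDiff ℝ sm (BF F) :=
  contDiff_p1 (smooth_wF hF)
lemma smooth_CF {F : ℝ × ℝ → ℝ} (hF : ContDiff ℝ sm F) : ContDiff ℝ sm (CF F) :=
  contDiff_p2 (smooth_wF hF)
lemma smooth_DF {F : ℝ × ℝ → ℝ} (hF : ContDiff ℝ sm F) : ContDiff ℝ sm (DF F) :=
  contDiff_p2 (smooth_AF hF)

lemma BF_eq {F : ℝ × ℝ → ℝ} (hF : ContDiff ℝ sm F) : BF F = p2 (vF F) :=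
  p1p2_swap (contDiff_p2 hF)
lemma DF_eq {F : ℝ × ℝ → ℝ} (hF : ContDiff ℝ sm F) : p1 (BF F) = DF F := by
  rw [BF_eq hF, p1p2_swap (smooth_vF hF)]; rfl

variable {R a : ℝ}

/-- P1: `∫ A v = ½ ∫ v(R,·)²`. -/
lemma ibp_Av (hR : 0 < R) {F : ℝ × ℝ → ℝ} (hF : ContDiff ℝ sm F)
    (hv0 : ∀ z ∈ Icc (-a) a, vF F (0, z) = 0) :
    ∫ q in cylStrip R a, AF F q * vF F q
      = (1/2) * ∫ z in Ioo (-a) a, (vF F (R, z))^2 := by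
  have hc : Continuous fun q => AF F q * vF F q :=
    (smooth_AF hF).continuous.mul (smooth_vF hF).continuous
  rw [iter_z_outer hc, ← integral_const_mul]
  apply setIntegral_congr_fun measurableSet_Ioo
  intro z hz
  show (∫ r in Ioo 0 R, AF F (r, z) * vF F (r, z)) = 1/2 * (vF F (R, z))^2
  rw [ioo_eq_interval hR.le]
  have key : ∀ r ∈ uIcc (0:ℝ) R, HasDerivAt (fun s => (1/2) * (vF F (s, z))^2)
      (AF F (r, z) * vF F (r, z)) r := by
    intro r _
    have hd := hasDerivAt_p1 (smooth_vF hF) r z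
    have h2 := (hd.fun_pow 2).const_mul (1/2 : ℝ)
    refine h2.congr_deriv (Eq.symm ?_)
    rw [pow_one]
    push_cast
    show AF F (r, z) * vF F (r, z) = 1 / 2 * (2 * vF F (r, z) * AF F (r, z))
    ring
  have hint : IntervalIntegrable (fun r => AF F (r, z) * vF F (r, z)) volume 0 R :=
    (hc.comp (continuous_id.prodMk continuous_const)).intervalIntegrable 0 R
  rw [intervalIntegral.integral_eq_sub_of_hasDerivAt key hint,
    hv0 z (Ioo_subset_Icc_self hz)]
  ring

/-- P2: `∫ B w = -½ ∫ w(0,·)²`. -/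
lemma ibp_Bw (hR : 0 < R) {F : ℝ × ℝ → ℝ} (hF : ContDiff ℝ sm F)
    (hwR : ∀ z ∈ Ioo (-a) a, wF F (R, z) = 0) :
    ∫ q in cylStrip R a, BF F q * wF F q
      = -(1/2) * ∫ z in Ioo (-a) a, (wF F (0, z))^2 := by
  have hc : Continuous fun q => BF F q * wF F q :=
    (smooth_BF hF).continuous.mul (smooth_wF hF).continuous
  rw [iter_z_outer hc, ← integral_const_mul]
  apply setIntegral_congr_fun measurableSet_Ioo
  intro z hz
  show (∫ r in Ioo 0 R, BF F (r, z) * wF F (r, z)) = -(1/2) * (wF F (0, z))^2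
  rw [ioo_eq_interval hR.le]
  have key : ∀ r ∈ uIcc (0:ℝ) R, HasDerivAt (fun s => (1/2) * (wF F (s, z))^2)
      (BF F (r, z) * wF F (r, z)) r := by
    intro r _
    have hd := hasDerivAt_p1 (smooth_wF hF) r z
    have h2 := (hd.fun_pow 2).const_mul (1/2 : ℝ)
    refine h2.congr_deriv (Eq.symm ?_)
    rw [pow_one]
    push_cast
    show BF F (r, z) * wF F (r, z) = 1 / 2 * (2 * wF F (r, z) * BF F (r, z))
    ring
  have hint : IntervalIntegrable (fun r => BF F (r, z) * wF F (r, z)) volume 0 R :=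
    (hc.comp (continuous_id.prodMk continuous_const)).intervalIntegrable 0 R
  rw [intervalIntegral.integral_eq_sub_of_hasDerivAt key hint, hwR z hz]
  ring

/-- P3: `∫ (v C + B w) = 0`. -/
lemma ibp_vC (ha : 0 < a) {F : ℝ × ℝ → ℝ} (hF : ContDiff ℝ sm F)
    (hwtop : ∀ r ∈ Ioo (0:ℝ) R, wF F (r, a) = 0 ∧ wF F (r, -a) = 0) :
    ∫ q in cylStrip R a, (vF F q * CF F q + BF F q * wF F q) = 0 := by
  have hc : Continuous fun q => vF F q * CF F q + BF F q * wF F q :=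
    ((smooth_vF hF).continuous.mul (smooth_CF hF).continuous).add
      ((smooth_BF hF).continuous.mul (smooth_wF hF).continuous)
  rw [iter_r_outer hc]
  have hcg : ∀ r ∈ Ioo (0:ℝ) R,
      (∫ z in Ioo (-a) a, (vF F (r, z) * CF F (r, z) + BF F (r, z) * wF F (r, z))) = 0 := by
    intro r hr
    rw [ioo_eq_interval (by linarith [ha] : -a ≤ a)]
    have key : ∀ z ∈ uIcc (-a) a, HasDerivAt (fun t => vF F (r, t) * wF F (r, t))
        (vF F (r, z) * CF F (r, z) + BF F (r, z) * wF F (r, z)) z := by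
      intro z _
      have hd : HasDerivAt (fun t => vF F (r, t) * wF F (r, t))
          (p2 (vF F) (r, z) * wF F (r, z) + vF F (r, z) * p2 (wF F) (r, z)) z :=
        (hasDerivAt_p2 (smooth_vF hF) r z).mul (hasDerivAt_p2 (smooth_wF hF) r z)
      convert hd using 1
      have hB : BF F (r, z) = p2 (vF F) (r, z) := by rw [BF_eq hF]
      rw [hB]
      show _ = p2 (vF F) (r, z) * wF F (r, z) + vF F (r, z) * CF F (r, z)
      ring
    have hint : IntervalIntegrable
        (fun z => vF F (r, z) * CF F (r, z) + BF F (r, z) * wF F (r, z)) volume (-a) a :=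
      (hc.comp (continuous_const.prodMk continuous_id)).intervalIntegrable _ _
    rw [intervalIntegral.integral_eq_sub_of_hasDerivAt key hint,
      (hwtop r hr).1, (hwtop r hr).2]
    ring
  rw [setIntegral_congr_fun measurableSet_Ioo hcg]
  simp

/-- P4: `∫ r (A C + D w) = 0`. -/
lemma ibp_AC (ha : 0 < a) {F : ℝ × ℝ → ℝ} (hF : ContDiff ℝ sm F)
    (hwtop : ∀ r ∈ Ioo (0:ℝ) R, wF F (r, a) = 0 ∧ wF F (r, -a) = 0) :
    ∫ q in cylStrip R a, q.1 * (AF F q * CF F q + DF F q * wF F q) = 0 := by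
  have hc : Continuous fun q : ℝ × ℝ => q.1 * (AF F q * CF F q + DF F q * wF F q) :=
    continuous_fst.mul (((smooth_AF hF).continuous.mul (smooth_CF hF).continuous).add
      ((smooth_DF hF).continuous.mul (smooth_wF hF).continuous))
  rw [iter_r_outer hc]
  have hcg : ∀ r ∈ Ioo (0:ℝ) R,
      (∫ z in Ioo (-a) a, (r, z).1 * (AF F (r, z) * CF F (r, z) + DF F (r, z) * wF F (r, z)))
        = 0 := by
    intro r hr
    have hpull : ∫ z in Ioo (-a) a, r * (AF F (r, z) * CF F (r, z) + DF F (r, z) * wF F (r, z))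
        = r * ∫ z in Ioo (-a) a, (AF F (r, z) * CF F (r, z) + DF F (r, z) * wF F (r, z)) :=
      integral_const_mul _ _
    rw [hpull]
    have hzero : ∫ z in Ioo (-a) a,
        (AF F (r, z) * CF F (r, z) + DF F (r, z) * wF F (r, z)) = 0 := by
      rw [ioo_eq_interval (by linarith [ha] : -a ≤ a)]
      have key : ∀ z ∈ uIcc (-a) a, HasDerivAt (fun t => AF F (r, t) * wF F (r, t))
          (AF F (r, z) * CF F (r, z) + DF F (r, z) * wF F (r, z)) z := by
        intro z _
        have hd : HasDerivAt (fun t => AF F (r, t) * wF F (r, t))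
            (p2 (AF F) (r, z) * wF F (r, z) + AF F (r, z) * p2 (wF F) (r, z)) z :=
          (hasDerivAt_p2 (smooth_AF hF) r z).mul (hasDerivAt_p2 (smooth_wF hF) r z)
        convert hd using 1
        show _ = DF F (r, z) * wF F (r, z) + AF F (r, z) * CF F (r, z)
        ring
      have hint : IntervalIntegrable
          (fun z => AF F (r, z) * CF F (r, z) + DF F (r, z) * wF F (r, z)) volume (-a) a := by
        have h3 : Continuous fun q : ℝ × ℝ => AF F q * CF F q + DF F q * wF F q :=
          ((smooth_AF hF).continuous.mul (smooth_CF hF).continuous).add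
            ((smooth_DF hF).continuous.mul (smooth_wF hF).continuous)
        exact (h3.comp (continuous_const.prodMk continuous_id)).intervalIntegrable _ _
      rw [intervalIntegral.integral_eq_sub_of_hasDerivAt key hint,
        (hwtop r hr).1, (hwtop r hr).2]
      ring
    rw [hzero, mul_zero]
  rw [setIntegral_congr_fun measurableSet_Ioo hcg]
  simp

/-- P5: `∫ (B w + r D w + r B²) = 0`. -/
lemma ibp_five (hR : 0 < R) {F : ℝ × ℝ → ℝ} (hF : ContDiff ℝ sm F)
    (hwR : ∀ z ∈ Ioo (-a) a, wF F (R, z) = 0) :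
    ∫ q in cylStrip R a,
      (BF F q * wF F q + q.1 * DF F q * wF F q + q.1 * (BF F q)^2) = 0 := by
  have hc : Continuous fun q : ℝ × ℝ =>
      BF F q * wF F q + q.1 * DF F q * wF F q + q.1 * (BF F q)^2 :=
    (((smooth_BF hF).continuous.mul (smooth_wF hF).continuous).add
      ((continuous_fst.mul (smooth_DF hF).continuous).mul (smooth_wF hF).continuous)).add
      (continuous_fst.mul ((smooth_BF hF).continuous.pow 2))
  rw [iter_z_outer hc]
  have hcg : ∀ z ∈ Ioo (-a) a,
      (∫ r in Ioo 0 R, (BF F (r, z) * wF F (r, z) + (r, z).1 * DF F (r, z) * wF F (r, z)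
        + (r, z).1 * (BF F (r, z))^2)) = 0 := by
    intro z hz
    show (∫ r in Ioo 0 R, (BF F (r, z) * wF F (r, z) + r * DF F (r, z) * wF F (r, z)
        + r * (BF F (r, z))^2)) = 0
    rw [ioo_eq_interval hR.le]
    have key : ∀ r ∈ uIcc (0:ℝ) R, HasDerivAt (fun s => s * BF F (s, z) * wF F (s, z))
        (BF F (r, z) * wF F (r, z) + r * DF F (r, z) * wF F (r, z) + r * (BF F (r, z))^2) r := by
      intro r _
      have hB : HasDerivAt (fun s => BF F (s, z)) (DF F (r, z)) r := by
        have := hasDerivAt_p1 (smooth_BF hF) r z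
        rwa [DF_eq hF] at this
      have hw : HasDerivAt (fun s => wF F (s, z)) (BF F (r, z)) r :=
        hasDerivAt_p1 (smooth_wF hF) r z
      have hd := ((hasDerivAt_id r).fun_mul hB).fun_mul hw
      simp only [id_eq] at hd
      refine hd.congr_deriv (Eq.symm ?_)
      ring
    have hint : IntervalIntegrable (fun r =>
        BF F (r, z) * wF F (r, z) + r * DF F (r, z) * wF F (r, z) + r * (BF F (r, z))^2)
        volume 0 R := by
      have h2 : Continuous fun r : ℝ =>
          BF F (r, z) * wF F (r, z) + r * DF F (r, z) * wF F (r, z) + r * (BF F (r, z))^2 :=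
        ((((smooth_BF hF).continuous.comp (continuous_id.prodMk continuous_const)).mul
          ((smooth_wF hF).continuous.comp (continuous_id.prodMk continuous_const))).add
          ((continuous_id.mul ((smooth_DF hF).continuous.comp
            (continuous_id.prodMk continuous_const))).mul
            ((smooth_wF hF).continuous.comp (continuous_id.prodMk continuous_const)))).add
          (continuous_id.mul (((smooth_BF hF).continuous.comp
            (continuous_id.prodMk continuous_const)).pow 2))
      exact h2.intervalIntegrable _ _
    rw [intervalIntegral.integral_eq_sub_of_hasDerivAt key hint, hwR z hz]
    ring
  rw [setIntegral_congr_fun measurableSet_Ioo hcg]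
  simp

/-- `H³` elliptic estimate for the modified stream function, Lemma 3.3:
there is `c > 0`, depending only on the cylinder, such that
`∫_Ω (ψ₁,rrz² + ψ₁,rzz² + ψ₁,zzz²) + ∫_{−a}^a ψ₁,zz²|_{r=0} dz + ∫_{−a}^a ψ₁,rz²|_{r=R} dz
  ≤ c |Γ,z|²_{2,Ω}`. -/
theorem stmt_8 (R a : ℝ) (hR : 0 < R) (ha : 0 < a) :
    ∃ c > 0, ∀ ψ Γ : ℝ → ℝ → ℝ, ModStream R a ψ Γ →
      (∫ q, ((qdr (qdr (qdz ψ)) q.1 q.2) ^ 2 + (qdr (qdz (qdz ψ)) q.1 q.2) ^ 2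
          + (qdz (qdz (qdz ψ)) q.1 q.2) ^ 2) ∂(cylMeas R a))
      + (∫ z in Ioo (-a) a, (qdz (qdz ψ) 0 z) ^ 2)
      + (∫ z in Ioo (-a) a, (qdr (qdz ψ) R z) ^ 2)
      ≤ c * ∫ q, (qdz Γ q.1 q.2) ^ 2 ∂(cylMeas R a) := by
  refine ⟨1, one_pos, ?_⟩
  intro ψ Γ hm
  set F : ℝ × ℝ → ℝ := fun q => ψ q.1 q.2 with hF_def
  set G : ℝ × ℝ → ℝ := fun q => Γ q.1 q.2 with hG_def
  have hF : ContDiff ℝ sm F := contDiff_infty.2 hm.smooth_ψ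
  have hG : ContDiff ℝ sm G := contDiff_infty.2 hm.smooth_Γ
  -- translations of the curried partial derivatives
  have e_p : ∀ r z : ℝ, qdr ψ r z = p1 F (r, z) := fun r z =>
    (hasDerivAt_p1 hF r z).deriv
  have e_pp : ∀ r z : ℝ, qdr (qdr ψ) r z = p1 (p1 F) (r, z) := by
    intro r z
    have hfun : (fun s => qdr ψ s z) = fun s => p1 F (s, z) := funext fun s => e_p s z
    show deriv (fun s => qdr ψ s z) r = _
    rw [hfun]
    exact (hasDerivAt_p1 (contDiff_p1 hF) r z).deriv
  have e_u : ∀ r z : ℝ, qdz ψ r z = p2 F (r, z) := fun r z =>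
    (hasDerivAt_p2 hF r z).deriv
  have e_v : ∀ r z : ℝ, qdr (qdz ψ) r z = vF F (r, z) := by
    intro r z
    have hfun : (fun s => qdz ψ s z) = fun s => p2 F (s, z) := funext fun s => e_u s z
    show deriv (fun s => qdz ψ s z) r = _
    rw [hfun]
    exact (hasDerivAt_p1 (contDiff_p2 hF) r z).deriv
  have e_w : ∀ r z : ℝ, qdz (qdz ψ) r z = wF F (r, z) := by
    intro r z
    have hfun : (fun t => qdz ψ r t) = fun t => p2 F (r, t) := funext fun t => e_u r t
    show deriv (fun t => qdz ψ r t) z = _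
    rw [hfun]
    exact (hasDerivAt_p2 (contDiff_p2 hF) r z).deriv
  have e_A : ∀ r z : ℝ, qdr (qdr (qdz ψ)) r z = AF F (r, z) := by
    intro r z
    have hfun : (fun s => qdr (qdz ψ) s z) = fun s => vF F (s, z) := funext fun s => e_v s z
    show deriv (fun s => qdr (qdz ψ) s z) r = _
    rw [hfun]
    exact (hasDerivAt_p1 (smooth_vF hF) r z).deriv
  have e_B : ∀ r z : ℝ, qdr (qdz (qdz ψ)) r z = BF F (r, z) := by
    intro r z
    have hfun : (fun s => qdz (qdz ψ) s z) = fun s => wF F (s, z) := funext fun s => e_w s z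
    show deriv (fun s => qdz (qdz ψ) s z) r = _
    rw [hfun]
    exact (hasDerivAt_p1 (smooth_wF hF) r z).deriv
  have e_C : ∀ r z : ℝ, qdz (qdz (qdz ψ)) r z = CF F (r, z) := by
    intro r z
    have hfun : (fun t => qdz (qdz ψ) r t) = fun t => wF F (r, t) := funext fun t => e_w r t
    show deriv (fun t => qdz (qdz ψ) r t) z = _
    rw [hfun]
    exact (hasDerivAt_p2 (smooth_wF hF) r z).deriv
  have e_G : ∀ r z : ℝ, qdz Γ r z = p2 G (r, z) := fun r z =>
    (hasDerivAt_p2 hG r z).deriv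
  -- the equation in terms of the uncurried partial derivatives
  have heqnP : ∀ q ∈ cylStrip R a,
      -(p1 (p1 F) q) - (3 / q.1) * p1 F q - p2 (p2 F) q = G q := by
    rintro ⟨r, z⟩ hq
    have h := hm.eqn r z hq
    rw [e_pp r z, e_p r z, e_w r z] at h
    exact h
  -- boundary facts
  have hwtop : ∀ r ∈ Ioo (0:ℝ) R, wF F (r, a) = 0 ∧ wF F (r, -a) = 0 :=
    w_top hR ha hF hG heqnP (fun r hr => hm.ψ_top r hr) (fun r hr => hm.Γ_top r hr)
  have hwR : ∀ z ∈ Ioo (-a) a, wF F (R, z) = 0 :=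
    w_lat hF (fun z hz => hm.ψ_lat z hz)
  have hv0 : ∀ z ∈ Icc (-a) a, vF F (0, z) = 0 := by
    apply v_axis hR hF
    obtain ⟨C, hC⟩ := hm.axis
    exact ⟨C, fun r hr z hz => by
      have := (hC r hr z hz).2.1
      rwa [e_v r z] at this⟩
  -- the z-derivative of the equation
  have hGz : ∀ q ∈ cylStrip R a,
      p2 G q = -(AF F q) - (3 / q.1) * vF F q - CF F q := by
    rintro ⟨r, z⟩ hq
    have hrI : r ∈ Ioo (0:ℝ) R := hq.1
    have hzI : z ∈ Ioo (-a) a := hq.2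
    have heq : ∀ t ∈ Ioo (-a) a,
        (-(p1 (p1 F) (r, t)) - (3 / r) * p1 F (r, t) - p2 (p2 F) (r, t)) = G (r, t) :=
      fun t ht => heqnP (r, t) ⟨hrI, ht⟩
    have hd_lhs : HasDerivAt
        (fun t => -(p1 (p1 F) (r, t)) - (3 / r) * p1 F (r, t) - p2 (p2 F) (r, t))
        (-(p2 (p1 (p1 F)) (r, z)) - (3 / r) * p2 (p1 F) (r, z) - CF F (r, z)) z :=
      (((hasDerivAt_p2 (contDiff_p1 (contDiff_p1 hF)) r z).neg).sub
        ((hasDerivAt_p2 (contDiff_p1 hF) r z).const_mul (3 / r))).sub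
        (hasDerivAt_p2 (contDiff_p2 (contDiff_p2 hF)) r z)
    have hee : (fun t => G (r, t)) =ᶠ[nhds z]
        (fun t => -(p1 (p1 F) (r, t)) - (3 / r) * p1 F (r, t) - p2 (p2 F) (r, t)) :=
      Filter.eventually_of_mem (isOpen_Ioo.mem_nhds hzI) (fun t ht => (heq t ht).symm)
    have hd_G : HasDerivAt (fun t => G (r, t))
        (-(p2 (p1 (p1 F)) (r, z)) - (3 / r) * p2 (p1 F) (r, z) - CF F (r, z)) z :=
      hd_lhs.congr_of_eventuallyEq hee
    have huniq := (hasDerivAt_p2 hG r z).unique hd_G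
    have sw_v : p2 (p1 F) = vF F := (p1p2_swap hF).symm
    have sw_A : p2 (p1 (p1 F)) = AF F := by
      rw [← p1p2_swap (contDiff_p1 hF), ← p1p2_swap hF]; rfl
    rw [sw_v, sw_A] at huniq
    exact huniq
  -- continuity of everything we integrate
  have cA := (smooth_AF hF).continuous
  have cB := (smooth_BF hF).continuous
  have cC := (smooth_CF hF).continuous
  have cD := (smooth_DF hF).continuous
  have cv := (smooth_vF hF).continuous
  have cw := (smooth_wF hF).continuous
  have cf1 : Continuous fun q : ℝ × ℝ => q.1 * (AF F q)^2 := continuous_fst.mul (cA.pow 2)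
  have cf2 : Continuous fun q : ℝ × ℝ => q.1 * (CF F q)^2 := continuous_fst.mul (cC.pow 2)
  have cf3 : Continuous fun q : ℝ × ℝ => AF F q * vF F q := cA.mul cv
  have cf4 : Continuous fun q : ℝ × ℝ => vF F q * CF F q + BF F q * wF F q :=
    (cv.mul cC).add (cB.mul cw)
  have cf5 : Continuous fun q : ℝ × ℝ => q.1 * (AF F q * CF F q + DF F q * wF F q) :=
    continuous_fst.mul ((cA.mul cC).add (cD.mul cw))
  have cf6 : Continuous fun q : ℝ × ℝ =>
      BF F q * wF F q + q.1 * DF F q * wF F q + q.1 * (BF F q)^2 :=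
    ((cB.mul cw).add ((continuous_fst.mul cD).mul cw)).add (continuous_fst.mul (cB.pow 2))
  have cf7 : Continuous fun q : ℝ × ℝ => BF F q * wF F q := cB.mul cw
  have cf8 : Continuous fun q : ℝ × ℝ => q.1 * (BF F q)^2 := continuous_fst.mul (cB.pow 2)
  -- rewrite the goal in terms of the p-functions
  simp only [e_A, e_B, e_C, e_w, e_v, e_G, Prod.mk.eta]
  rw [integ_cyl, integ_cyl, one_mul]
  -- the main volume integral splits
  have hmain : (∫ q in cylStrip R a, 2 * π * q.1 *
        ((AF F q)^2 + (BF F q)^2 + (CF F q)^2))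
      = 2*π*(∫ q in cylStrip R a, q.1 * (AF F q)^2)
        + 2*π*(∫ q in cylStrip R a, q.1 * (BF F q)^2)
        + 2*π*(∫ q in cylStrip R a, q.1 * (CF F q)^2) := by
    have hptw : ∀ q : ℝ × ℝ, 2 * π * q.1 *
        ((AF F q)^2 + (BF F q)^2 + (CF F q)^2)
        = 2*π*(q.1 * (AF F q)^2) + 2*π*(q.1 * (BF F q)^2) + 2*π*(q.1 * (CF F q)^2) := by
      intro q; ring
    rw [show (fun q : ℝ × ℝ => 2 * π * q.1 *
        ((AF F q)^2 + (BF F q)^2 + (CF F q)^2))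
        = fun q : ℝ × ℝ => 2*π*(q.1 * (AF F q)^2) + 2*π*(q.1 * (BF F q)^2)
          + 2*π*(q.1 * (CF F q)^2) from funext hptw]
    rw [integral_add (integrableOn_strip ((continuous_const.fun_mul cf1).fun_add
        (continuous_const.fun_mul cf8)))
        (integrableOn_strip (continuous_const.fun_mul cf2)),
      integral_add (integrableOn_strip (continuous_const.fun_mul cf1))
        (integrableOn_strip (continuous_const.fun_mul cf8)),
      integral_const_mul, integral_const_mul, integral_const_mul]
  rw [hmain]
  -- the comparison integrand
  set T : ℝ × ℝ → ℝ := fun q =>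
    2*π*(q.1 * (AF F q)^2) + 2*π*(q.1 * (CF F q)^2)
    + 12*π*(AF F q * vF F q)
    + 12*π*(vF F q * CF F q + BF F q * wF F q)
    + 4*π*(q.1 * (AF F q * CF F q + DF F q * wF F q))
    + (-4*π)*(BF F q * wF F q + q.1 * DF F q * wF F q + q.1 * (BF F q)^2)
    + (-8*π)*(BF F q * wF F q)
    + 4*π*(q.1 * (BF F q)^2) with hT_def
  have hTc : Continuous T := by
    rw [hT_def]
    exact ((((((((continuous_const.mul cf1).add (continuous_const.mul cf2)).add
      (continuous_const.mul cf3)).add (continuous_const.mul cf4)).add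
      (continuous_const.mul cf5)).add (continuous_const.mul cf6)).add
      (continuous_const.mul cf7)).add (continuous_const.mul cf8))
  have hgc : Continuous fun q : ℝ × ℝ => 2 * π * q.1 * (p2 G q)^2 :=
    (continuous_const.mul continuous_fst).mul ((contDiff_p2 hG).continuous.pow 2)
  have hTle : ∀ q ∈ cylStrip R a, T q ≤ 2 * π * q.1 * (p2 G q)^2 := by
    intro q hq
    have hr0 : 0 < q.1 := hq.1.1
    rw [hGz q hq]
    have key : 2*π*q.1*(-(AF F q) - (3/q.1) * vF F q - CF F q)^2
        = T q + 18*π*(vF F q)^2/q.1 := by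
      rw [hT_def]
      field_simp
      ring
    have h18 : 0 ≤ 18*π*(vF F q)^2/q.1 := by positivity
    have : 2*π*q.1*(-(AF F q) - (3/q.1) * vF F q - CF F q)^2
        = 2*π*q.1*(-AF F q - 3/q.1 * vF F q - CF F q)^2 := by ring_nf
    linarith [key, this]
  have hmono : (∫ q in cylStrip R a, T q)
      ≤ ∫ q in cylStrip R a, 2 * π * q.1 * (p2 G q)^2 :=
    setIntegral_mono_on (integrableOn_strip hTc) (integrableOn_strip hgc)
      (measurableSet_cylStrip R a) hTle
  -- evaluate the pieces of ∫ T by the integration-by-parts lemmas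
  have hAv := ibp_Av hR hF hv0
  have hBw := ibp_Bw hR hF hwR
  have hvC := ibp_vC ha hF hwtop
  have hACz := ibp_AC ha hF hwtop
  have h5 := ibp_five hR hF hwR
  have hTsplit : (∫ q in cylStrip R a, T q)
      = 2*π*(∫ q in cylStrip R a, q.1 * (AF F q)^2)
        + 2*π*(∫ q in cylStrip R a, q.1 * (CF F q)^2)
        + 12*π*(∫ q in cylStrip R a, AF F q * vF F q)
        + 12*π*(∫ q in cylStrip R a, (vF F q * CF F q + BF F q * wF F q))
        + 4*π*(∫ q in cylStrip R a, q.1 * (AF F q * CF F q + DF F q * wF F q))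
        + (-4*π)*(∫ q in cylStrip R a,
            (BF F q * wF F q + q.1 * DF F q * wF F q + q.1 * (BF F q)^2))
        + (-8*π)*(∫ q in cylStrip R a, BF F q * wF F q)
        + 4*π*(∫ q in cylStrip R a, q.1 * (BF F q)^2) := by
    simp only [hT_def]
    have i1 := integrableOn_strip (R := R) (a := a) (g := fun q : ℝ × ℝ => 2*π*(q.1 * (AF F q)^2))
      (continuous_const.mul cf1)
    have i2 := integrableOn_strip (R := R) (a := a) (g := fun q : ℝ × ℝ => 2*π*(q.1 * (CF F q)^2))
      (continuous_const.mul cf2)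
    have i3 := integrableOn_strip (R := R) (a := a) (g := fun q : ℝ × ℝ => 12*π*(AF F q * vF F q))
      (continuous_const.mul cf3)
    have i4 := integrableOn_strip (R := R) (a := a)
      (g := fun q : ℝ × ℝ => 12*π*(vF F q * CF F q + BF F q * wF F q))
      (continuous_const.mul cf4)
    have i5 := integrableOn_strip (R := R) (a := a)
      (g := fun q : ℝ × ℝ => 4*π*(q.1 * (AF F q * CF F q + DF F q * wF F q)))
      (continuous_const.mul cf5)
    have i6 := integrableOn_strip (R := R) (a := a)
      (g := fun q : ℝ × ℝ =>
        (-4*π)*(BF F q * wF F q + q.1 * DF F q * wF F q + q.1 * (BF F q)^2))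
      (continuous_const.mul cf6)
    have i7 := integrableOn_strip (R := R) (a := a) (g := fun q : ℝ × ℝ => (-8*π)*(BF F q * wF F q))
      (continuous_const.mul cf7)
    have i8 := integrableOn_strip (R := R) (a := a) (g := fun q : ℝ × ℝ => 4*π*(q.1 * (BF F q)^2))
      (continuous_const.mul cf8)
    have c1 : Continuous fun q : ℝ × ℝ => 2*π*(q.1 * (AF F q)^2) := continuous_const.mul cf1
    have c2 : Continuous fun q : ℝ × ℝ => 2*π*(q.1 * (CF F q)^2) := continuous_const.mul cf2
    have c3 : Continuous fun q : ℝ × ℝ => 12*π*(AF F q * vF F q) := continuous_const.mul cf3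
    have c4 : Continuous fun q : ℝ × ℝ => 12*π*(vF F q * CF F q + BF F q * wF F q) :=
      continuous_const.mul cf4
    have c5 : Continuous fun q : ℝ × ℝ => 4*π*(q.1 * (AF F q * CF F q + DF F q * wF F q)) :=
      continuous_const.mul cf5
    have c6 : Continuous fun q : ℝ × ℝ =>
        (-4*π)*(BF F q * wF F q + q.1 * DF F q * wF F q + q.1 * (BF F q)^2) :=
      continuous_const.mul cf6
    have c7 : Continuous fun q : ℝ × ℝ => (-8*π)*(BF F q * wF F q) := continuous_const.mul cf7
    have i12 := integrableOn_strip (R := R) (a := a) (c1.fun_add c2)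
    have i123 := integrableOn_strip (R := R) (a := a) ((c1.fun_add c2).fun_add c3)
    have i1234 := integrableOn_strip (R := R) (a := a) (((c1.fun_add c2).fun_add c3).fun_add c4)
    have i12345 := integrableOn_strip (R := R) (a := a) ((((c1.fun_add c2).fun_add c3).fun_add c4).fun_add c5)
    have i123456 := integrableOn_strip (R := R) (a := a)
      (((((c1.fun_add c2).fun_add c3).fun_add c4).fun_add c5).fun_add c6)
    have i1234567 := integrableOn_strip (R := R) (a := a)
      ((((((c1.fun_add c2).fun_add c3).fun_add c4).fun_add c5).fun_add c6).fun_add c7)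
    rw [integral_add i1234567 i8, integral_add i123456 i7, integral_add i12345 i6,
      integral_add i1234 i5, integral_add i123 i4, integral_add i12 i3,
      integral_add i1 i2]
    simp only [integral_const_mul]
  -- nonnegativity facts
  have hJ8 : 0 ≤ ∫ q in cylStrip R a, q.1 * (BF F q)^2 :=
    setIntegral_nonneg (measurableSet_cylStrip R a)
      (fun q hq => mul_nonneg hq.1.1.le (sq_nonneg _))
  have hIv0 : 0 ≤ ∫ z in Ioo (-a) a, (vF F (R, z))^2 :=
    setIntegral_nonneg measurableSet_Ioo (fun z _ => sq_nonneg _)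
  have hIw0 : 0 ≤ ∫ z in Ioo (-a) a, (wF F (0, z))^2 :=
    setIntegral_nonneg measurableSet_Ioo (fun z _ => sq_nonneg _)
  have hpi : (3:ℝ) < π := Real.pi_gt_three
  have hpJ8 : 0 ≤ π * ∫ q in cylStrip R a, q.1 * (BF F q)^2 :=
    mul_nonneg Real.pi_pos.le hJ8
  have hpIv : (∫ z in Ioo (-a) a, (vF F (R, z))^2)
      ≤ 6 * (π * ∫ z in Ioo (-a) a, (vF F (R, z))^2) := by
    nlinarith [hIv0, hpi]
  have hpIw : (∫ z in Ioo (-a) a, (wF F (0, z))^2)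
      ≤ 4 * (π * ∫ z in Ioo (-a) a, (wF F (0, z))^2) := by
    nlinarith [hIw0, hpi]
  have e3 : 12*π*(∫ q in cylStrip R a, AF F q * vF F q)
      = 6*π*(∫ z in Ioo (-a) a, (vF F (R, z))^2) := by rw [hAv]; ring
  have e4 : 12*π*(∫ q in cylStrip R a, (vF F q * CF F q + BF F q * wF F q)) = 0 := by
    rw [hvC, mul_zero]
  have e5 : 4*π*(∫ q in cylStrip R a, q.1 * (AF F q * CF F q + DF F q * wF F q)) = 0 := by
    rw [hACz, mul_zero]
  have e6 : (-4*π)*(∫ q in cylStrip R a,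
      (BF F q * wF F q + q.1 * DF F q * wF F q + q.1 * (BF F q)^2)) = 0 := by
    rw [h5, mul_zero]
  have e7 : (-8*π)*(∫ q in cylStrip R a, BF F q * wF F q)
      = 4*π*(∫ z in Ioo (-a) a, (wF F (0, z))^2) := by rw [hBw]; ring
  have m1 : 0 ≤ (π - 3) * (∫ z in Ioo (-a) a, (vF F (R, z))^2) :=
    mul_nonneg (by linarith) hIv0
  have m2 : 0 ≤ (π - 3) * (∫ z in Ioo (-a) a, (wF F (0, z))^2) :=
    mul_nonneg (by linarith) hIw0
  have m3 : 0 ≤ (π - 3) * (∫ q in cylStrip R a, q.1 * (BF F q)^2) :=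
    mul_nonneg (by linarith) hJ8
  linarith [hmono, hTsplit, e3, e4, e5, e6, e7, hJ8, hIv0, hIw0, m1, m2, m3]
end
end
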